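/- Fix a real number σ̃ > 0. Define, for integers k ≥ l ≥ 2, A'_{k,l}(σ̃) := −(k−1)!·Γ(σ̃+l−1)/(l!·Γ(σ̃+k)), and A'_{k,l}(σ̃) := 0 for k < l. Then for all integers k, l ≥ 2, the sum over m from 2 to max(k,l) of A_{k,m}(σ̃)·A'_{m,l}(σ̃) equals 1 if k = l and 0 if k ≠ l; i.e., A'(σ̃) is a two-sided inverse of the lower-triangular matrix A(σ̃). -/

import Mathlib

open Real Finset

/-- The matrix `A(σ̃)`: `A_{k,l} = k(k−1)` if `k = l+1`, `−k(σ̃+k−1)` if `k = l`,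
and `0` otherwise. -/
noncomputable def Amat (σ : ℝ) (k l : ℕ) : ℝ :=
  if k = l + 1 then (k : ℝ) * ((k : ℝ) - 1)
  else if k = l then -(k : ℝ) * (σ + (k : ℝ) - 1)
  else 0

/-- The matrix `A'(σ̃)`: `A'_{k,l} = −(k−1)!·Γ(σ̃+l−1)/(l!·Γ(σ̃+k))` for `k ≥ l`,
and `0` for `k < l`. -/
noncomputable def Amat' (σ : ℝ) (k l : ℕ) : ℝ :=
  if l ≤ k then
    -((Nat.factorial (k - 1) : ℝ) * Real.Gamma (σ + (l : ℝ) - 1) /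
      ((Nat.factorial l : ℝ) * Real.Gamma (σ + k)))
  else 0

lemma Amat_eq_zero {σ : ℝ} {k m : ℕ} (h1 : k ≠ m + 1) (h2 : k ≠ m) : Amat σ k m = 0 := by
  simp [Amat, h1, h2]

lemma Amat'_eq_zero {σ : ℝ} {m l : ℕ} (h : m < l) : Amat' σ m l = 0 := by
  simp [Amat', not_le.mpr h]

theorem Amat_mul_Amat'_eq_delta (σ : ℝ) (hσ : 0 < σ) (k l : ℕ) (hk : 2 ≤ k) (hl : 2 ≤ l) :
    ∑ m ∈ Finset.Icc 2 (max k l), Amat σ k m * Amat' σ m l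
      = if k = l then (1 : ℝ) else 0 := by
  rcases lt_trichotomy k l with hkl | rfl | hlk
  · rw [if_neg hkl.ne, max_eq_right hkl.le]
    apply Finset.sum_eq_zero
    intro m hm
    simp only [Finset.mem_Icc] at hm
    rcases eq_or_lt_of_le hm.2 with rfl | hml
    · rw [Amat_eq_zero (by omega) (by omega), zero_mul]
    · rw [Amat'_eq_zero hml, mul_zero]
  · rw [if_pos rfl, max_self]
    rw [Finset.sum_eq_single_of_mem k (by simp [hk])]
    · obtain ⟨n, rfl⟩ : ∃ n, k = n + 2 := ⟨k - 2, by omega⟩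
      have hg : Real.Gamma (σ + ((n + 2 : ℕ) : ℝ)) = (σ + (n : ℝ) + 1) * Real.Gamma (σ + (n : ℝ) + 1) := by
        have h2 : (σ + ((n + 2 : ℕ) : ℝ)) = (σ + n + 1) + 1 := by push_cast; ring
        rw [h2, Real.Gamma_add_one (by positivity)]
      have hgpos : 0 < Real.Gamma (σ + (n : ℝ) + 1) := Real.Gamma_pos_of_pos (by positivity)
      have e2 : Amat σ (n + 2) (n + 2) = -((n + 2 : ℕ) : ℝ) * (σ + ((n + 2 : ℕ) : ℝ) - 1) := by
        simp [Amat]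
      have e4 : Amat' σ (n + 2) (n + 2) =
          -(((n + 1).factorial : ℝ) * Real.Gamma (σ + ((n + 2 : ℕ) : ℝ) - 1) /
            (((n + 2).factorial : ℝ) * Real.Gamma (σ + ((n + 2 : ℕ) : ℝ)))) := by
        simp [Amat', show n + 2 - 1 = n + 1 by omega]
      rw [e2, e4, hg]
      have harg : (σ + ((n + 2 : ℕ) : ℝ) - 1) = σ + n + 1 := by push_cast; ring
      rw [harg]
      have h1 : ((n + 2).factorial : ℝ) = ((n + 2 : ℕ) : ℝ) * ((n + 1).factorial : ℝ) := by
        rw [show n + 2 = (n + 1) + 1 by ring, Nat.factorial_succ]; push_cast; ring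
      rw [h1]
      have hfpos : (0 : ℝ) < ((n + 1).factorial : ℝ) := by positivity
      field_simp
    · intro m hm hml
      simp only [Finset.mem_Icc] at hm
      rw [Amat'_eq_zero (lt_of_le_of_ne hm.2 hml), mul_zero]
  · rw [if_neg hlk.ne', max_eq_left hlk.le]
    have hk3 : 3 ≤ k := by omega
    have hsub : ({k - 1, k} : Finset ℕ) ⊆ Finset.Icc 2 k := by
      intro m hm
      simp only [Finset.mem_insert, Finset.mem_singleton] at hm
      rcases hm with rfl | rfl <;> simp [Finset.mem_Icc] <;> omega
    rw [← Finset.sum_subset hsub]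
    · rw [Finset.sum_pair (by omega : k - 1 ≠ k)]
      obtain ⟨n, rfl⟩ : ∃ n, k = n + 3 := ⟨k - 3, by omega⟩
      have hk1 : n + 3 - 1 = n + 2 := by omega
      simp only [hk1]
      have hg : Real.Gamma (σ + ((n + 3 : ℕ) : ℝ)) = (σ + (n : ℝ) + 2) * Real.Gamma (σ + ((n + 2 : ℕ) : ℝ)) := by
        have h2 : (σ + ((n + 3 : ℕ) : ℝ)) = (σ + ((n + 2 : ℕ) : ℝ)) + 1 := by push_cast; ring
        rw [h2, Real.Gamma_add_one (by positivity)]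
        push_cast; ring
      have hgpos : 0 < Real.Gamma (σ + ((n + 2 : ℕ) : ℝ)) := Real.Gamma_pos_of_pos (by positivity)
      have e1 : Amat σ (n + 3) (n + 2) = ((n + 3 : ℕ) : ℝ) * (((n + 3 : ℕ) : ℝ) - 1) := by
        simp [Amat]
      have e2 : Amat σ (n + 3) (n + 3) = -((n + 3 : ℕ) : ℝ) * (σ + ((n + 3 : ℕ) : ℝ) - 1) := by
        simp [Amat]
      have e3 : Amat' σ (n + 2) l =
          -(((n + 1).factorial : ℝ) * Real.Gamma (σ + (l : ℝ) - 1) /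
            ((l.factorial : ℝ) * Real.Gamma (σ + ((n + 2 : ℕ) : ℝ)))) := by
        simp [Amat', show l ≤ n + 2 by omega, show n + 2 - 1 = n + 1 by omega]
      have e4 : Amat' σ (n + 3) l =
          -(((n + 2).factorial : ℝ) * Real.Gamma (σ + (l : ℝ) - 1) /
            ((l.factorial : ℝ) * Real.Gamma (σ + ((n + 3 : ℕ) : ℝ)))) := by
        simp [Amat', show l ≤ n + 3 by omega, show n + 3 - 1 = n + 2 by omega]
      rw [e1, e2, e3, e4, hg]
      have h1 : ((n + 2).factorial : ℝ) = ((n + 2 : ℕ) : ℝ) * ((n + 1).factorial : ℝ) := by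
        rw [show n + 2 = (n + 1) + 1 by ring, Nat.factorial_succ]; push_cast; ring
      rw [h1]
      have hfpos : (0 : ℝ) < ((n + 1).factorial : ℝ) := by positivity
      have hlpos : (0 : ℝ) < ((l).factorial : ℝ) := by positivity
      field_simp
      push_cast; ring
    · intro m hm hm2
      simp only [Finset.mem_Icc] at hm
      simp only [Finset.mem_insert, Finset.mem_singleton, not_or] at hm2
      rw [Amat_eq_zero (by omega) (by omega), zero_mul]
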